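/- arXiv:2206.11868 — 4 statements merged into one kernel-verified Lean document; each statement's English description precedes it below -/
import Mathlib

section
/- Let d ≥ 1, let j ∈ {1,…,d}, let δ ∈ (0, 1/2), and let (Ω_n, P_n), n ≥ 1, be probability spaces. Let X_n : Ω_n → ℝ^d be random vectors and β_n ∈ ℝ^d. Suppose L, H, U are pairwise disjoint subsets of {1,…,d} whose union is {1,…,d}, with H nonempty and |U| < j ≤ |U| + |H|, such that: (i) for every coordinate k and every C > 0, lim_{n→∞} P_n(|X_n(k) − β_n(k)| ≥ C·n^{−δ}) = 0; (ii) for every k ∈ L and m ∈ H, n^δ·(β_n(m) − β_n(k)) → ∞; and (iii) for every m ∈ H and k ∈ U, n^δ·(β_n(k) − β_n(m)) → ∞. Let ĵ_n : Ω_n → {1,…,d} be measurable random indices such that almost surely ĵ_n attains the j-th largest value of the random vector X_n, i.e., #{k : X_n(k) > X_n(ĵ_n)} < j and #{k : X_n(k) ≥ X_n(ĵ_n)} ≥ j. Then lim_{n→∞} P_n(ĵ_n ∈ H) = 1. -/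
open MeasureTheory Filter Topology
open scoped ENNReal

lemma key_det (d j : ℕ) (x b : Fin d → ℝ) (ε : ℝ)
    (L H U : Finset (Fin d))
    (hHU : Disjoint H U)
    (hunion : L ∪ H ∪ U = Finset.univ) (hHne : H.Nonempty)
    (hjU : U.card < j) (hjUH : j ≤ U.card + H.card)
    (hx : ∀ k, |x k - b k| < ε)
    (hLHsep : ∀ k ∈ L, ∀ m ∈ H, 2 * ε < b m - b k)
    (hHUsep : ∀ m ∈ H, ∀ k ∈ U, 2 * ε < b k - b m)
    (i : Fin d)
    (h1 : (Finset.univ.filter (fun k => x i < x k)).card < j)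
    (h2 : j ≤ (Finset.univ.filter (fun k => x i ≤ x k)).card) :
    i ∈ H := by
  have hLH' : ∀ k ∈ L, ∀ m ∈ H, x k < x m := by
    intro k hk m hm
    have a1 := abs_lt.mp (hx k)
    have a2 := abs_lt.mp (hx m)
    have := hLHsep k hk m hm
    linarith [a1.1, a1.2, a2.1, a2.2]
  have hHU' : ∀ m ∈ H, ∀ k ∈ U, x m < x k := by
    intro m hm k hk
    have a1 := abs_lt.mp (hx m)
    have a2 := abs_lt.mp (hx k)
    have := hHUsep m hm k hk
    linarith [a1.1, a1.2, a2.1, a2.2]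
  obtain ⟨m0, hm0⟩ := hHne
  have hLU' : ∀ k ∈ L, ∀ u ∈ U, x k < x u := fun k hk u hu =>
    lt_trans (hLH' k hk m0 hm0) (hHU' m0 hm0 u hu)
  have hi : i ∈ L ∪ H ∪ U := hunion ▸ Finset.mem_univ i
  rcases Finset.mem_union.mp hi with hi' | hiU
  · rcases Finset.mem_union.mp hi' with hiL | hiH
    · exfalso
      have hsub : H ∪ U ⊆ Finset.univ.filter (fun k => x i < x k) := by
        intro k hk
        simp only [Finset.mem_filter, Finset.mem_univ, true_and]
        rcases Finset.mem_union.mp hk with h | h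
        · exact hLH' i hiL k h
        · exact hLU' i hiL k h
      have := Finset.card_le_card hsub
      rw [Finset.card_union_of_disjoint hHU] at this
      omega
    · exact hiH
  · exfalso
    have hsub : Finset.univ.filter (fun k => x i ≤ x k) ⊆ U := by
      intro k hk
      simp only [Finset.mem_filter, Finset.mem_univ, true_and] at hk
      have hkmem : k ∈ L ∪ H ∪ U := hunion ▸ Finset.mem_univ k
      rcases Finset.mem_union.mp hkmem with h' | h
      · rcases Finset.mem_union.mp h' with h | h
        · exact absurd (hLU' k h i hiU) (not_lt.mpr hk)
        · exact absurd (hHU' k h i hiU) (not_lt.mpr hk)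
      · exact h
    have := Finset.card_le_card hsub
    omega

/-- Under coordinatewise `n^{−δ}`-rate consistency and separation of the
blocks `L`, `H`, `U`, a measurable random index that a.s. attains the `j`-th largest
value of `Xₙ` lies in `H` with probability tending to one. -/
theorem observed_jth_largest_in_near_tie_set
    (d : ℕ) (hd : 1 ≤ d) (j : ℕ) (hj : 1 ≤ j) (hjd : j ≤ d)
    (δ : ℝ) (hδ : δ ∈ Set.Ioo (0 : ℝ) (1/2))
    (Ω : ℕ → Type*) [∀ n, MeasurableSpace (Ω n)]
    (P : ∀ n, Measure (Ω n)) [∀ n, IsProbabilityMeasure (P n)]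
    (X : ∀ n, Ω n → Fin d → ℝ) (hX : ∀ n, Measurable (X n))
    (β : ℕ → Fin d → ℝ)
    (L H U : Finset (Fin d))
    (hLH : Disjoint L H) (hLU : Disjoint L U) (hHU : Disjoint H U)
    (hunion : L ∪ H ∪ U = Finset.univ) (hHne : H.Nonempty)
    (hjU : U.card < j) (hjUH : j ≤ U.card + H.card)
    (hcons : ∀ k : Fin d, ∀ C : ℝ, 0 < C →
      Tendsto (fun n : ℕ => P n {ω | C * (n : ℝ) ^ (-δ) ≤ |X n ω k - β n k|})
        atTop (𝓝 0))
    (hsepLH : ∀ k ∈ L, ∀ m ∈ H,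
      Tendsto (fun n : ℕ => (n : ℝ) ^ δ * (β n m - β n k)) atTop atTop)
    (hsepHU : ∀ m ∈ H, ∀ k ∈ U,
      Tendsto (fun n : ℕ => (n : ℝ) ^ δ * (β n k - β n m)) atTop atTop)
    (jhat : ∀ n, Ω n → Fin d) (hjhat : ∀ n, Measurable (jhat n))
    (hrank : ∀ n, ∀ᵐ ω ∂(P n),
      (Finset.univ.filter (fun k => X n ω (jhat n ω) < X n ω k)).card < j ∧
      j ≤ (Finset.univ.filter (fun k => X n ω (jhat n ω) ≤ X n ω k)).card) :
    Tendsto (fun n : ℕ => P n {ω | jhat n ω ∈ H}) atTop (𝓝 1) := by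
  -- separations eventually exceed 2 n^{-δ}
  have sep_ev : ∀ (f g : ℕ → ℝ),
      Tendsto (fun n : ℕ => (n : ℝ) ^ δ * (f n - g n)) atTop atTop →
      ∀ᶠ n : ℕ in atTop, 2 * (n : ℝ) ^ (-δ) < f n - g n := by
    intro f g hfg
    filter_upwards [hfg.eventually_gt_atTop 2, eventually_ge_atTop 1] with n hn2 hn1
    have hnpos : (0 : ℝ) < n := by exact_mod_cast hn1
    have hmul : (n : ℝ) ^ δ * (n : ℝ) ^ (-δ) = 1 := by
      rw [← Real.rpow_add hnpos]; simp
    have hpos : 0 < (n : ℝ) ^ (-δ) := Real.rpow_pos_of_pos hnpos _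
    calc 2 * (n : ℝ) ^ (-δ) < ((n : ℝ) ^ δ * (f n - g n)) * (n : ℝ) ^ (-δ) :=
          mul_lt_mul_of_pos_right hn2 hpos
      _ = (f n - g n) * ((n : ℝ) ^ δ * (n : ℝ) ^ (-δ)) := by ring
      _ = f n - g n := by rw [hmul, mul_one]
  have hev1 : ∀ᶠ n : ℕ in atTop, ∀ k ∈ L, ∀ m ∈ H,
      2 * (n : ℝ) ^ (-δ) < β n m - β n k := by
    rw [eventually_all_finset]
    intro k hk
    rw [eventually_all_finset]
    intro m hm
    exact sep_ev (fun n => β n m) (fun n => β n k) (hsepLH k hk m hm)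
  have hev2 : ∀ᶠ n : ℕ in atTop, ∀ m ∈ H, ∀ k ∈ U,
      2 * (n : ℝ) ^ (-δ) < β n k - β n m := by
    rw [eventually_all_finset]
    intro m hm
    rw [eventually_all_finset]
    intro k hk
    exact sep_ev (fun n => β n k) (fun n => β n m) (hsepHU m hm k hk)
  -- eventual bound on the complement probability
  have hbound : ∀ᶠ n : ℕ in atTop,
      P n {ω | jhat n ω ∈ H}ᶜ ≤
        ∑ k : Fin d, P n {ω | 1 * (n : ℝ) ^ (-δ) ≤ |X n ω k - β n k|} := by
    filter_upwards [hev1, hev2] with n h1 h2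
    have hsub : {ω | jhat n ω ∈ H}ᶜ ⊆
        (⋃ k : Fin d, {ω | 1 * (n : ℝ) ^ (-δ) ≤ |X n ω k - β n k|}) ∪
          {ω | ¬((Finset.univ.filter (fun k => X n ω (jhat n ω) < X n ω k)).card < j ∧
            j ≤ (Finset.univ.filter (fun k => X n ω (jhat n ω) ≤ X n ω k)).card)} := by
      intro ω hω
      by_contra hcon
      rw [Set.mem_union] at hcon
      push_neg at hcon
      obtain ⟨hnb, hr⟩ := hcon
      simp only [Set.mem_iUnion, Set.mem_setOf_eq, not_exists, not_le] at hnb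
      simp only [Set.mem_setOf_eq] at hr
      push_neg at hr
      have hq := hr
      exact hω (key_det d j (X n ω) (β n) ((n : ℝ) ^ (-δ)) L H U hHU hunion hHne hjU hjUH
        (fun k => by have := hnb k; linarith) h1 h2 (jhat n ω) hq.1 hq.2)
    calc P n {ω | jhat n ω ∈ H}ᶜ
        ≤ P n ((⋃ k : Fin d, {ω | 1 * (n : ℝ) ^ (-δ) ≤ |X n ω k - β n k|}) ∪
            {ω | ¬((Finset.univ.filter (fun k => X n ω (jhat n ω) < X n ω k)).card < j ∧
              j ≤ (Finset.univ.filter (fun k => X n ω (jhat n ω) ≤ X n ω k)).card)}) :=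
          measure_mono hsub
      _ ≤ P n (⋃ k : Fin d, {ω | 1 * (n : ℝ) ^ (-δ) ≤ |X n ω k - β n k|}) +
            P n {ω | ¬((Finset.univ.filter (fun k => X n ω (jhat n ω) < X n ω k)).card < j ∧
              j ≤ (Finset.univ.filter (fun k => X n ω (jhat n ω) ≤ X n ω k)).card)} :=
          measure_union_le _ _
      _ = P n (⋃ k : Fin d, {ω | 1 * (n : ℝ) ^ (-δ) ≤ |X n ω k - β n k|}) + 0 := by
          rw [ae_iff.mp (hrank n)]
      _ = P n (⋃ k : Fin d, {ω | 1 * (n : ℝ) ^ (-δ) ≤ |X n ω k - β n k|}) := add_zero _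
      _ ≤ ∑ k : Fin d, P n {ω | 1 * (n : ℝ) ^ (-δ) ≤ |X n ω k - β n k|} :=
          measure_iUnion_fintype_le _ _
  have hsum0 : Tendsto
      (fun n : ℕ => ∑ k : Fin d, P n {ω | 1 * (n : ℝ) ^ (-δ) ≤ |X n ω k - β n k|})
      atTop (𝓝 0) := by
    have := tendsto_finset_sum Finset.univ (fun k _ => hcons k 1 one_pos)
    simpa using this
  have hcompl0 : Tendsto (fun n : ℕ => P n {ω | jhat n ω ∈ H}ᶜ) atTop (𝓝 0) :=
    tendsto_of_tendsto_of_tendsto_of_le_of_le' tendsto_const_nhds hsum0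
      (Eventually.of_forall fun n => zero_le) hbound
  have hSm : ∀ n, MeasurableSet {ω | jhat n ω ∈ H} := fun n =>
    (hjhat n) ((Set.toFinite {i : Fin d | i ∈ H}).measurableSet)
  have heq : ∀ n, P n {ω | jhat n ω ∈ H} = 1 - P n {ω | jhat n ω ∈ H}ᶜ := by
    intro n
    rw [prob_compl_eq_one_sub (hSm n), ENNReal.sub_sub_cancel ENNReal.one_ne_top prob_le_one]
  simp only [heq]
  have hfin : Tendsto (fun n : ℕ => (1 : ℝ≥0∞) - P n {ω | jhat n ω ∈ H}ᶜ) atTop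
      (𝓝 (1 - 0)) :=
    ENNReal.Tendsto.sub tendsto_const_nhds hcompl0 (Or.inr (by simp))
  simpa using hfin
end

section
/- Let d ≥ 1, let j ∈ {1,…,d}, let δ ∈ (0, 1/2), and let (Ω_n, P_n), n ≥ 1, be probability spaces. Let X_n : Ω_n → ℝ^d be random vectors and β_n ∈ ℝ^d. Suppose L, H, U are pairwise disjoint subsets of {1,…,d} whose union is {1,…,d}, with H nonempty and |U| < j ≤ |U| + |H|, such that: (i) for every coordinate k and every C > 0, lim_{n→∞} P_n(|X_n(k) − β_n(k)| ≥ C·n^{−δ}) = 0; (ii) for every k ∈ L and m ∈ H, n^δ·(β_n(m) − β_n(k)) → ∞; and (iii) for every m ∈ H and k ∈ U, n^δ·(β_n(k) − β_n(m)) → ∞. Let ĵ_n : Ω_n → {1,…,d} be measurable random indices such that almost surely #{k : X_n(k) > X_n(ĵ_n)} < j and #{k : X_n(k) ≥ X_n(ĵ_n)} ≥ j. Then for every coordinate k ∉ H and every C > 0, lim_{n→∞} P_n(|X_n(k) − X_n(ĵ_n)| < C·n^{−δ}) = 0. -/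
open MeasureTheory Filter Topology
open scoped ENNReal

lemma core_sep {d : ℕ} (j : ℕ) (L H U : Finset (Fin d))
    (hHU : Disjoint H U)
    (hunion : L ∪ H ∪ U = Finset.univ) (hHne : H.Nonempty)
    (hjU : U.card < j) (hjUH : j ≤ U.card + H.card)
    (x b : Fin d → ℝ) (t C : ℝ) (ht : 0 < t) (hC : 0 < C)
    (hsep1 : ∀ k ∈ L, ∀ m ∈ H, (C + 2) * t < b m - b k)
    (hsep2 : ∀ m ∈ H, ∀ k ∈ U, (C + 2) * t < b k - b m)
    (hclose : ∀ i, |x i - b i| < t)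
    (i₀ : Fin d)
    (hr1 : (Finset.univ.filter (fun k => x i₀ < x k)).card < j)
    (hr2 : j ≤ (Finset.univ.filter (fun k => x i₀ ≤ x k)).card)
    (k₀ : Fin d) (hk₀ : k₀ ∉ H) :
    C * t ≤ |x k₀ - x i₀| := by
  have habs : ∀ i, b i - t < x i ∧ x i < b i + t := by
    intro i
    have := abs_lt.mp (hclose i)
    constructor <;> linarith [this.1, this.2]
  have hLltH : ∀ k ∈ L, ∀ m ∈ H, x k + C * t < x m := by
    intro k hk m hm
    have h1 := (habs k).2
    have h2 := (habs m).1
    have h3 := hsep1 k hk m hm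
    nlinarith
  have hHltU : ∀ m ∈ H, ∀ k ∈ U, x m + C * t < x k := by
    intro m hm k hk
    have h1 := (habs m).2
    have h2 := (habs k).1
    have h3 := hsep2 m hm k hk
    nlinarith
  have hCt : 0 < C * t := mul_pos hC ht
  obtain ⟨m₀, hm₀⟩ := hHne
  have hmem : ∀ a : Fin d, a ∈ L ∨ a ∈ H ∨ a ∈ U := by
    intro a
    have : a ∈ L ∪ H ∪ U := hunion ▸ Finset.mem_univ a
    simpa [Finset.mem_union, or_assoc] using this
  have hi₀H : i₀ ∈ H := by
    rcases hmem i₀ with hL | hH | hU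
    · exfalso
      have hsub : H ∪ U ⊆ Finset.univ.filter (fun k => x i₀ < x k) := by
        intro a ha
        simp only [Finset.mem_union] at ha
        simp only [Finset.mem_filter, Finset.mem_univ, true_and]
        rcases ha with h | h
        · have := hLltH i₀ hL a h; linarith
        · have h1 := hLltH i₀ hL m₀ hm₀
          have h2 := hHltU m₀ hm₀ a h
          linarith
      have hcard := Finset.card_le_card hsub
      have hHU' : (H ∪ U).card = H.card + U.card := Finset.card_union_of_disjoint hHU
      omega
    · exact hH
    · exfalso
      have hsub : Finset.univ.filter (fun k => x i₀ ≤ x k) ⊆ U := by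
        intro a ha
        simp only [Finset.mem_filter, Finset.mem_univ, true_and] at ha
        by_contra haU
        rcases hmem a with hL | hH | hU'
        · have h1 := hLltH a hL m₀ hm₀
          have h2 := hHltU m₀ hm₀ i₀ hU
          linarith
        · have := hHltU a hH i₀ hU
          linarith
        · exact haU hU'
      have hcard := Finset.card_le_card hsub
      omega
  rcases hmem k₀ with hL | hH | hU
  · have := hLltH k₀ hL i₀ hi₀H
    have : C * t ≤ x i₀ - x k₀ := by linarith
    calc C * t ≤ x i₀ - x k₀ := this
      _ ≤ |x i₀ - x k₀| := le_abs_self _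
      _ = |x k₀ - x i₀| := abs_sub_comm _ _
  · exact absurd hH hk₀
  · have := hHltU i₀ hi₀H k₀ hU
    have h2 : C * t ≤ x k₀ - x i₀ := by linarith
    exact h2.trans (le_abs_self _)

/-- Under the same setup as Statement 4, coordinates outside the near-tie
set `H` are eventually farther than `C·n^{−δ}` from the observed `j`-th largest value,
with probability tending to one. -/
theorem coordinates_outside_near_tie_set_separated
    (d : ℕ) (hd : 1 ≤ d) (j : ℕ) (hj : 1 ≤ j) (hjd : j ≤ d)
    (δ : ℝ) (hδ : δ ∈ Set.Ioo (0 : ℝ) (1/2))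
    (Ω : ℕ → Type*) [∀ n, MeasurableSpace (Ω n)]
    (P : ∀ n, Measure (Ω n)) [∀ n, IsProbabilityMeasure (P n)]
    (X : ∀ n, Ω n → Fin d → ℝ) (hX : ∀ n, Measurable (X n))
    (β : ℕ → Fin d → ℝ)
    (L H U : Finset (Fin d))
    (hLH : Disjoint L H) (hLU : Disjoint L U) (hHU : Disjoint H U)
    (hunion : L ∪ H ∪ U = Finset.univ) (hHne : H.Nonempty)
    (hjU : U.card < j) (hjUH : j ≤ U.card + H.card)
    (hcons : ∀ k : Fin d, ∀ C : ℝ, 0 < C →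
      Tendsto (fun n : ℕ => P n {ω | C * (n : ℝ) ^ (-δ) ≤ |X n ω k - β n k|})
        atTop (𝓝 0))
    (hsepLH : ∀ k ∈ L, ∀ m ∈ H,
      Tendsto (fun n : ℕ => (n : ℝ) ^ δ * (β n m - β n k)) atTop atTop)
    (hsepHU : ∀ m ∈ H, ∀ k ∈ U,
      Tendsto (fun n : ℕ => (n : ℝ) ^ δ * (β n k - β n m)) atTop atTop)
    (jhat : ∀ n, Ω n → Fin d) (hjhat : ∀ n, Measurable (jhat n))
    (hrank : ∀ n, ∀ᵐ ω ∂(P n),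
      (Finset.univ.filter (fun k => X n ω (jhat n ω) < X n ω k)).card < j ∧
      j ≤ (Finset.univ.filter (fun k => X n ω (jhat n ω) ≤ X n ω k)).card) :
    ∀ k : Fin d, k ∉ H → ∀ C : ℝ, 0 < C →
      Tendsto (fun n : ℕ =>
          P n {ω | |X n ω k - X n ω (jhat n ω)| < C * (n : ℝ) ^ (-δ)})
        atTop (𝓝 0) := by
  intro k₀ hk₀ C hC
  -- the sum of consistency probabilities tends to 0
  have hS : Tendsto (fun n : ℕ => ∑ i : Fin d,
      P n {ω | 1 * (n : ℝ) ^ (-δ) ≤ |X n ω i - β n i|}) atTop (𝓝 0) := by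
    have := tendsto_finset_sum (Finset.univ : Finset (Fin d))
      (fun i _ => hcons i 1 one_pos)
    simpa using this
  -- eventual separation of β's at scale (C+2)·n^{-δ}
  have h1 : ∀ᶠ n : ℕ in atTop, ∀ k ∈ L, ∀ m ∈ H,
      C + 2 < (n : ℝ) ^ δ * (β n m - β n k) := by
    rw [Filter.eventually_all_finset]
    intro k hk
    rw [Filter.eventually_all_finset]
    intro m hm
    exact (hsepLH k hk m hm).eventually_gt_atTop _
  have h2 : ∀ᶠ n : ℕ in atTop, ∀ m ∈ H, ∀ k ∈ U,
      C + 2 < (n : ℝ) ^ δ * (β n k - β n m) := by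
    rw [Filter.eventually_all_finset]
    intro m hm
    rw [Filter.eventually_all_finset]
    intro k hk
    exact (hsepHU m hm k hk).eventually_gt_atTop _
  have hbound : ∀ᶠ n : ℕ in atTop,
      P n {ω | |X n ω k₀ - X n ω (jhat n ω)| < C * (n : ℝ) ^ (-δ)} ≤
      ∑ i : Fin d, P n {ω | 1 * (n : ℝ) ^ (-δ) ≤ |X n ω i - β n i|} := by
    filter_upwards [h1, h2, eventually_ge_atTop 1] with n hn1 hn2 hn
    have hnpos : (0 : ℝ) < n := by exact_mod_cast hn
    have hpow : (0 : ℝ) < (n : ℝ) ^ δ := Real.rpow_pos_of_pos hnpos δ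
    set t : ℝ := (n : ℝ) ^ (-δ) with htdef
    have ht : 0 < t := Real.rpow_pos_of_pos hnpos _
    have htinv : t = ((n : ℝ) ^ δ)⁻¹ := Real.rpow_neg hnpos.le δ
    have hsep1 : ∀ k ∈ L, ∀ m ∈ H, (C + 2) * t < β n m - β n k := by
      intro k hk m hm
      have := hn1 k hk m hm
      rw [htinv, ← div_eq_mul_inv, div_lt_iff₀ hpow]
      nlinarith
    have hsep2 : ∀ m ∈ H, ∀ k ∈ U, (C + 2) * t < β n k - β n m := by
      intro m hm k hk
      have := hn2 m hm k hk
      rw [htinv, ← div_eq_mul_inv, div_lt_iff₀ hpow]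
      nlinarith
    have h0 : P n {ω | ¬ ((Finset.univ.filter
        (fun k => X n ω (jhat n ω) < X n ω k)).card < j ∧
        j ≤ (Finset.univ.filter (fun k => X n ω (jhat n ω) ≤ X n ω k)).card)} = 0 :=
      ae_iff.mp (hrank n)
    have hincl : {ω | |X n ω k₀ - X n ω (jhat n ω)| < C * t} ⊆
        {ω | ¬ ((Finset.univ.filter
          (fun k => X n ω (jhat n ω) < X n ω k)).card < j ∧
          j ≤ (Finset.univ.filter (fun k => X n ω (jhat n ω) ≤ X n ω k)).card)} ∪
        ⋃ i : Fin d, {ω | 1 * t ≤ |X n ω i - β n i|} := by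
      intro ω hω
      by_contra hmem
      simp only [Set.mem_union, Set.mem_iUnion, Set.mem_setOf_eq, not_or,
        not_exists, not_not, not_le] at hmem
      obtain ⟨hQ, hB⟩ := hmem
      have hclose : ∀ i, |X n ω i - β n i| < t := by
        intro i
        have := hB i
        linarith
      have := core_sep j L H U hHU hunion hHne hjU hjUH
        (X n ω) (β n) t C ht hC hsep1 hsep2 hclose (jhat n ω) hQ.1 hQ.2 k₀ hk₀
      exact absurd hω (not_lt.mpr this)
    calc P n {ω | |X n ω k₀ - X n ω (jhat n ω)| < C * t}
        ≤ P n ({ω | ¬ ((Finset.univ.filter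
            (fun k => X n ω (jhat n ω) < X n ω k)).card < j ∧
            j ≤ (Finset.univ.filter (fun k => X n ω (jhat n ω) ≤ X n ω k)).card)} ∪
          ⋃ i : Fin d, {ω | 1 * t ≤ |X n ω i - β n i|}) := measure_mono hincl
      _ ≤ P n {ω | ¬ ((Finset.univ.filter
            (fun k => X n ω (jhat n ω) < X n ω k)).card < j ∧
            j ≤ (Finset.univ.filter (fun k => X n ω (jhat n ω) ≤ X n ω k)).card)} +
          P n (⋃ i : Fin d, {ω | 1 * t ≤ |X n ω i - β n i|}) := measure_union_le _ _
      _ = P n (⋃ i : Fin d, {ω | 1 * t ≤ |X n ω i - β n i|}) := by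
          rw [h0, zero_add]
      _ ≤ ∑ i : Fin d, P n {ω | 1 * t ≤ |X n ω i - β n i|} :=
          measure_iUnion_fintype_le _ _
  exact tendsto_of_tendsto_of_tendsto_of_le_of_le' tendsto_const_nhds hS
    (Eventually.of_forall fun n => zero_le) hbound
end

section
/- Let d ≥ 1, let j ∈ {1,…,d}, let δ ∈ (0, 1/2), and let (Ω_n, P_n), n ≥ 1, be probability spaces. Let X_n : Ω_n → ℝ^d be random vectors and β_n ∈ ℝ^d. Suppose L, H, U are pairwise disjoint subsets of {1,…,d} whose union is {1,…,d}, with H nonempty and |U| < j ≤ |U| + |H|, such that: (i) for every coordinate k and every C > 0, lim_{n→∞} P_n(|X_n(k) − β_n(k)| ≥ C·n^{−δ}) = 0; (ii) for every k ∈ L and m ∈ H, n^δ·(β_n(m) − β_n(k)) → ∞; (iii) for every m ∈ H and k ∈ U, n^δ·(β_n(k) − β_n(m)) → ∞; and (iv) for every pair k, m ∈ H, √n·(β_n(k) − β_n(m)) → 0 (the near-tie condition). Let ĵ_n : Ω_n → {1,…,d} be measurable random indices such that almost surely #{k : X_n(k) > X_n(ĵ_n)} < j and #{k : X_n(k) ≥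 X_n(ĵ_n)} ≥ j. Then for every coordinate k ∈ H and every C > 0, lim_{n→∞} P_n(|X_n(k) − X_n(ĵ_n)| ≥ C·n^{−δ}) = 0. -/
open MeasureTheory Filter Topology
open scoped ENNReal

/-- Under the setup of Statement 4 plus the near-tie condition on `H`,
coordinates inside `H` are within `C·n^{−δ}` of the observed `j`-th largest value,
with probability tending to one. -/
theorem coordinates_inside_near_tie_set_close
    (d : ℕ) (hd : 1 ≤ d) (j : ℕ) (hj : 1 ≤ j) (hjd : j ≤ d)
    (δ : ℝ) (hδ : δ ∈ Set.Ioo (0 : ℝ) (1/2))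
    (Ω : ℕ → Type*) [∀ n, MeasurableSpace (Ω n)]
    (P : ∀ n, Measure (Ω n)) [∀ n, IsProbabilityMeasure (P n)]
    (X : ∀ n, Ω n → Fin d → ℝ) (hX : ∀ n, Measurable (X n))
    (β : ℕ → Fin d → ℝ)
    (L H U : Finset (Fin d))
    (hLH : Disjoint L H) (hLU : Disjoint L U) (hHU : Disjoint H U)
    (hunion : L ∪ H ∪ U = Finset.univ) (hHne : H.Nonempty)
    (hjU : U.card < j) (hjUH : j ≤ U.card + H.card)
    (hcons : ∀ k : Fin d, ∀ C : ℝ, 0 < C →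
      Tendsto (fun n : ℕ => P n {ω | C * (n : ℝ) ^ (-δ) ≤ |X n ω k - β n k|})
        atTop (𝓝 0))
    (hsepLH : ∀ k ∈ L, ∀ m ∈ H,
      Tendsto (fun n : ℕ => (n : ℝ) ^ δ * (β n m - β n k)) atTop atTop)
    (hsepHU : ∀ m ∈ H, ∀ k ∈ U,
      Tendsto (fun n : ℕ => (n : ℝ) ^ δ * (β n k - β n m)) atTop atTop)
    (hneartie : ∀ k ∈ H, ∀ m ∈ H,
      Tendsto (fun n : ℕ => Real.sqrt n * (β n k - β n m)) atTop (𝓝 0))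
    (jhat : ∀ n, Ω n → Fin d) (hjhat : ∀ n, Measurable (jhat n))
    (hrank : ∀ n, ∀ᵐ ω ∂(P n),
      (Finset.univ.filter (fun k => X n ω (jhat n ω) < X n ω k)).card < j ∧
      j ≤ (Finset.univ.filter (fun k => X n ω (jhat n ω) ≤ X n ω k)).card) :
    ∀ k ∈ H, ∀ C : ℝ, 0 < C →
      Tendsto (fun n : ℕ =>
          P n {ω | C * (n : ℝ) ^ (-δ) ≤ |X n ω k - X n ω (jhat n ω)|})
        atTop (𝓝 0) := by
  intro k hk C hC
  obtain ⟨hδ0, hδh⟩ := hδ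
  obtain ⟨m₀, hm₀⟩ := hHne
  -- the dominating sum tends to 0
  have hS : Tendsto (fun n : ℕ => ∑ i : Fin d,
      P n {ω | C/4 * (n : ℝ) ^ (-δ) ≤ |X n ω i - β n i|}) atTop (𝓝 0) := by
    have h := tendsto_finset_sum (Finset.univ : Finset (Fin d))
      (fun i _ => hcons i (C/4) (by positivity))
    simpa using h
  refine tendsto_of_tendsto_of_tendsto_of_le_of_le' tendsto_const_nhds hS
    (Eventually.of_forall fun n => zero_le) ?_
  -- eventual separation facts
  have hE1 : ∀ᶠ n : ℕ in atTop, ∀ l : Fin d, l ∈ L → ∀ m : Fin d, m ∈ H →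
      C/2 < (n : ℝ) ^ δ * (β n m - β n l) := by
    rw [eventually_all]
    intro l
    by_cases hl : l ∈ L
    · simp only [hl, forall_true_left]
      rw [eventually_all]
      intro m
      by_cases hm : m ∈ H
      · simpa [hm] using (hsepLH l hl m hm).eventually_gt_atTop (C/2)
      · simp [hm]
    · simp [hl]
  have hE2 : ∀ᶠ n : ℕ in atTop, ∀ m : Fin d, m ∈ H → ∀ u : Fin d, u ∈ U →
      C/2 < (n : ℝ) ^ δ * (β n u - β n m) := by
    rw [eventually_all]
    intro m
    by_cases hm : m ∈ H
    · simp only [hm, forall_true_left]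
      rw [eventually_all]
      intro u
      by_cases hu : u ∈ U
      · simpa [hu] using (hsepHU m hm u hu).eventually_gt_atTop (C/2)
      · simp [hu]
    · simp [hm]
  have hkey : ∀ a ∈ H, ∀ b ∈ H,
      Tendsto (fun n : ℕ => (n : ℝ) ^ δ * (β n a - β n b)) atTop (𝓝 0) := by
    intro a ha b hb
    have h1 : Tendsto (fun n : ℕ => (n : ℝ) ^ (δ - 1/2)) atTop (𝓝 0) := by
      have h2 : Tendsto (fun x : ℝ => x ^ (-(1/2 - δ))) atTop (𝓝 0) :=
        tendsto_rpow_neg_atTop (by linarith)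
      have h3 := h2.comp (tendsto_natCast_atTop_atTop (R := ℝ))
      simpa [Function.comp_def, neg_sub] using h3
    have hmul := h1.mul (hneartie a ha b hb)
    rw [zero_mul] at hmul
    refine hmul.congr' ?_
    filter_upwards [eventually_ge_atTop 1] with n hn
    have hn0 : (0 : ℝ) < (n : ℝ) := by exact_mod_cast hn
    rw [Real.sqrt_eq_rpow, ← mul_assoc, ← Real.rpow_add hn0]
    norm_num
  have hE3 : ∀ᶠ n : ℕ in atTop, ∀ a : Fin d, a ∈ H → ∀ b : Fin d, b ∈ H →
      |(n : ℝ) ^ δ * (β n a - β n b)| < C/4 := by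
    rw [eventually_all]
    intro a
    by_cases ha : a ∈ H
    · simp only [ha, forall_true_left]
      rw [eventually_all]
      intro b
      by_cases hb : b ∈ H
      · have h4 := (hkey a ha b hb).eventually
          (Ioo_mem_nhds (by linarith : -(C/4) < (0:ℝ)) (by linarith : (0:ℝ) < C/4))
        filter_upwards [h4] with n hn
        intro _
        exact abs_lt.2 ⟨hn.1, hn.2⟩
      · simp [hb]
    · simp [ha]
  filter_upwards [hE1, hE2, hE3, eventually_ge_atTop 1] with n h1 h2 h3 hn1
  have hn0 : (0 : ℝ) < (n : ℝ) := by exact_mod_cast hn1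
  set t : ℝ := (n : ℝ) ^ (-δ) with ht_def
  have ht : 0 < t := Real.rpow_pos_of_pos hn0 _
  have htδ : (n : ℝ) ^ δ * t = 1 := by
    rw [ht_def, ← Real.rpow_add hn0]; simp
  -- conversion helpers
  have hconv : ∀ x c : ℝ, c < (n : ℝ) ^ δ * x → c * t < x := by
    intro x c h
    have h2' := mul_lt_mul_of_pos_right h ht
    have h3' : ((n : ℝ) ^ δ * x) * t = x := by
      rw [mul_comm ((n : ℝ) ^ δ) x, mul_assoc, htδ, mul_one]
    linarith
  have hconvabs : ∀ x c : ℝ, |(n : ℝ) ^ δ * x| < c → |x| < c * t := by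
    intro x c h
    have hp : (0 : ℝ) < (n : ℝ) ^ δ := Real.rpow_pos_of_pos hn0 _
    rw [abs_mul, abs_of_pos hp] at h
    have h2' := mul_lt_mul_of_pos_right h ht
    have h3' : ((n : ℝ) ^ δ * |x|) * t = |x| := by
      rw [mul_comm ((n : ℝ) ^ δ) (|x|), mul_assoc, htδ, mul_one]
    linarith
  -- bound the measure
  set Bad : Set (Ω n) := {ω | C * t ≤ |X n ω k - X n ω (jhat n ω)|} with hBad_def
  set Rnk : Set (Ω n) := {ω |
      (Finset.univ.filter (fun i => X n ω (jhat n ω) < X n ω i)).card < j ∧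
      j ≤ (Finset.univ.filter (fun i => X n ω (jhat n ω) ≤ X n ω i)).card} with hRnk_def
  have hdiff : P n (Bad \ Rnk) = 0 := by
    refine measure_mono_null (fun ω hω => hω.2) ?_
    have := hrank n
    rwa [ae_iff] at this
  have hstep : P n Bad ≤ P n (Bad ∩ Rnk) := by
    calc P n Bad ≤ P n (Bad ∩ Rnk) + P n (Bad \ Rnk) := measure_le_inter_add_diff _ _ _
    _ = P n (Bad ∩ Rnk) := by rw [hdiff, add_zero]
  refine hstep.trans ?_
  have hsub : Bad ∩ Rnk ⊆ ⋃ i : Fin d, {ω : Ω n | C/4 * t ≤ |X n ω i - β n i|} := by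
    rintro ω ⟨hbad, hrk⟩
    by_contra hnot
    simp only [Set.mem_iUnion, Set.mem_setOf_eq, not_exists, not_le] at hnot
    -- all coordinates close to their β's
    have hclose : ∀ i : Fin d, |X n ω i - β n i| < C/4 * t := hnot
    -- ordering between groups
    have hLltH : ∀ l ∈ L, ∀ m ∈ H, X n ω l < X n ω m := by
      intro l hl m hm
      have hsep := hconv _ _ (h1 l hl m hm)
      have hcl := abs_lt.1 (hclose l)
      have hcm := abs_lt.1 (hclose m)
      linarith
    have hHltU : ∀ m ∈ H, ∀ u ∈ U, X n ω m < X n ω u := by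
      intro m hm u hu
      have hsep := hconv _ _ (h2 m hm u hu)
      have hcm := abs_lt.1 (hclose m)
      have hcu := abs_lt.1 (hclose u)
      linarith
    -- the observed index lies in H
    have hjH : jhat n ω ∈ H := by
      have hmem : jhat n ω ∈ L ∪ H ∪ U := hunion ▸ Finset.mem_univ _
      rcases Finset.mem_union.1 hmem with hLH' | hU'
      · rcases Finset.mem_union.1 hLH' with hL' | hH'
        · exfalso
          have hsub2 : H ∪ U ⊆
              Finset.univ.filter (fun i => X n ω (jhat n ω) < X n ω i) := by
            intro i hi
            simp only [Finset.mem_filter, Finset.mem_univ, true_and]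
            rcases Finset.mem_union.1 hi with hiH | hiU
            · exact hLltH _ hL' _ hiH
            · exact lt_trans (hLltH _ hL' _ hm₀) (hHltU _ hm₀ _ hiU)
          have hcard := Finset.card_le_card hsub2
          rw [Finset.card_union_of_disjoint hHU] at hcard
          have := hrk.1
          omega
        · exact hH'
      · exfalso
        have hsub2 : (Finset.univ.filter (fun i => X n ω (jhat n ω) ≤ X n ω i)) ⊆ U := by
          intro i hi
          simp only [Finset.mem_filter, Finset.mem_univ, true_and] at hi
          have hmemi : i ∈ L ∪ H ∪ U := hunion ▸ Finset.mem_univ _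
          rcases Finset.mem_union.1 hmemi with hiLH | hiU
          · exfalso
            rcases Finset.mem_union.1 hiLH with hiL | hiH
            · have := lt_trans (hLltH _ hiL _ hm₀) (hHltU _ hm₀ _ hU')
              linarith
            · have := hHltU _ hiH _ hU'
              linarith
          · exact hiU
        have hcard := Finset.card_le_card hsub2
        have := hrk.2
        omega
    -- now derive contradiction with hbad
    have hbk : |β n k - β n (jhat n ω)| < C/4 * t := hconvabs _ _ (h3 k hk _ hjH)
    have hck := abs_lt.1 (hclose k)
    have hcj := abs_lt.1 (hclose (jhat n ω))
    have hbk' := abs_lt.1 hbk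
    have hCt : C/4 * t + C/4 * t + C/4 * t < C * t := by
      have hq : 0 < C/4 * t := by positivity
      nlinarith
    have habs : |X n ω k - X n ω (jhat n ω)| < C * t := by
      rcases abs_cases (X n ω k - X n ω (jhat n ω)) with ⟨he, _⟩ | ⟨he, _⟩ <;>
        rw [he] <;> linarith
    exact absurd hbad (not_le.2 habs)
  calc P n (Bad ∩ Rnk) ≤ P n (⋃ i : Fin d, {ω : Ω n | C/4 * t ≤ |X n ω i - β n i|}) :=
        measure_mono hsub
    _ ≤ ∑ i : Fin d, P n {ω : Ω n | C/4 * t ≤ |X n ω i - β n i|} :=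
        measure_iUnion_fintype_le _ _
end

section
/- Let d ≥ 1, let j ∈ {1,…,d}, let δ ∈ (0, 1/2), and let (Ω_n, P_n), n ≥ 1, be probability spaces. Let X_n : Ω_n → ℝ^d be random vectors and β_n ∈ ℝ^d. Suppose L, H, U are pairwise disjoint subsets of {1,…,d} whose union is {1,…,d}, with H nonempty and |U| < j ≤ |U| + |H|, such that: (i) for every coordinate k and every C > 0, lim_{n→∞} P_n(|X_n(k) − β_n(k)| ≥ C·n^{−δ}) = 0; (ii) for every k ∈ L and m ∈ H, n^δ·(β_n(m) − β_n(k)) → ∞; (iii) for every m ∈ H and k ∈ U, n^δ·(β_n(k) − β_n(m)) → ∞; and (iv) for every pair k, m ∈ H, √n·(β_n(k) − β_n(m)) → 0 (the near-tie condition). Let ĵ_n : Ω_n → {1,…,d} be measurable random indices such that almost surely #{k : X_n(k) > X_n(ĵ_n)} < j and #{k : X_n(k) ≥ X_n(ĵ_n)} ≥ j. Fix constants c_L, c_R > 0 and define the (random) estimated near-tie set Ĥ_n(ω) = {k : −c_L·n^{−δ} ≤ X_n(k)(ω) − X_n(ĵ_n(ω))(ω) ≤ c_R·n^{−δ}}.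 Then for every coordinate k and every ε > 0, lim_{n→∞} P_n(|𝟙(k ∈ Ĥ_n) − 𝟙(k ∈ H)| > ε) = 0; that is, P_n(k ∈ Ĥ_n) → 1 for every k ∈ H, and P_n(k ∈ Ĥ_n) → 0 for every k ∉ H. -/
open MeasureTheory Filter Topology
open scoped ENNReal

set_option maxHeartbeats 1000000 in
/-- Consistency of the estimated near-tie set: the indicator of
`k ∈ Ĥₙ` converges in probability to the indicator of `k ∈ H`, where
`Ĥₙ = {k : −c_L·n^{−δ} ≤ Xₙ(k) − Xₙ(ĵₙ) ≤ c_R·n^{−δ}}`. -/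
theorem estimated_near_tie_set_consistent
    (d : ℕ) (hd : 1 ≤ d) (j : ℕ) (hj : 1 ≤ j) (hjd : j ≤ d)
    (δ : ℝ) (hδ : δ ∈ Set.Ioo (0 : ℝ) (1/2))
    (Ω : ℕ → Type*) [∀ n, MeasurableSpace (Ω n)]
    (P : ∀ n, Measure (Ω n)) [∀ n, IsProbabilityMeasure (P n)]
    (X : ∀ n, Ω n → Fin d → ℝ) (hX : ∀ n, Measurable (X n))
    (β : ℕ → Fin d → ℝ)
    (L H U : Finset (Fin d))
    (hLH : Disjoint L H) (hLU : Disjoint L U) (hHU : Disjoint H U)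
    (hunion : L ∪ H ∪ U = Finset.univ) (hHne : H.Nonempty)
    (hjU : U.card < j) (hjUH : j ≤ U.card + H.card)
    (hcons : ∀ k : Fin d, ∀ C : ℝ, 0 < C →
      Tendsto (fun n : ℕ => P n {ω | C * (n : ℝ) ^ (-δ) ≤ |X n ω k - β n k|})
        atTop (𝓝 0))
    (hsepLH : ∀ k ∈ L, ∀ m ∈ H,
      Tendsto (fun n : ℕ => (n : ℝ) ^ δ * (β n m - β n k)) atTop atTop)
    (hsepHU : ∀ m ∈ H, ∀ k ∈ U,
      Tendsto (fun n : ℕ => (n : ℝ) ^ δ * (β n k - β n m)) atTop atTop)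
    (hneartie : ∀ k ∈ H, ∀ m ∈ H,
      Tendsto (fun n : ℕ => Real.sqrt n * (β n k - β n m)) atTop (𝓝 0))
    (jhat : ∀ n, Ω n → Fin d) (hjhat : ∀ n, Measurable (jhat n))
    (hrank : ∀ n, ∀ᵐ ω ∂(P n),
      (Finset.univ.filter (fun k => X n ω (jhat n ω) < X n ω k)).card < j ∧
      j ≤ (Finset.univ.filter (fun k => X n ω (jhat n ω) ≤ X n ω k)).card)
    (cL cR : ℝ) (hcL : 0 < cL) (hcR : 0 < cR) :
    ∀ k : Fin d, ∀ ε : ℝ, 0 < ε →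
      Tendsto (fun n : ℕ =>
          P n {ω | ε <
            |(if -cL * (n : ℝ) ^ (-δ) ≤ X n ω k - X n ω (jhat n ω) ∧
                  X n ω k - X n ω (jhat n ω) ≤ cR * (n : ℝ) ^ (-δ)
                then (1 : ℝ) else 0) -
              (if k ∈ H then (1 : ℝ) else 0)|})
        atTop (𝓝 0) := by

  obtain ⟨hδ0, hδ2⟩ := hδ
  intro k ε hε
  set C : ℝ := min cL cR / 4 with hCdef
  have hmin : 0 < min cL cR := lt_min hcL hcR
  have hC : 0 < C := by positivity
  set D : ℝ := max cL cR + 3 * C with hDdef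
  have hmaxpos : 0 < max cL cR := lt_of_lt_of_le hcL (le_max_left _ _)
  have hD2C : 2 * C < D := by simp only [hDdef]; linarith
  have hmem : ∀ i : Fin d, i ∈ L ∨ i ∈ H ∨ i ∈ U := by
    intro i
    have : i ∈ L ∪ H ∪ U := hunion ▸ Finset.mem_univ i
    simpa [Finset.mem_union, or_assoc] using this
  -- eventual positivity of n^{-δ}
  have hEt : ∀ᶠ n : ℕ in atTop, 0 < (n : ℝ) ^ (-δ) := by
    filter_upwards [eventually_ge_atTop 1] with n hn
    exact Real.rpow_pos_of_pos (by exact_mod_cast hn) _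
  -- eventual near-tie bound on β within H
  have hEH : ∀ᶠ n : ℕ in atTop, ∀ m ∈ H, ∀ m' ∈ H,
      |β n m - β n m'| ≤ C * (n : ℝ) ^ (-δ) := by
    rw [eventually_all_finset]; intro m hm
    rw [eventually_all_finset]; intro m' hm'
    have h0 := (NormedAddCommGroup.tendsto_nhds_zero.1 (hneartie m hm m' hm')) C hC
    filter_upwards [h0, eventually_ge_atTop 1] with n h1 h2
    have hn1 : (1 : ℝ) ≤ n := by exact_mod_cast h2
    have hn0 : (0 : ℝ) < n := lt_of_lt_of_le one_pos hn1
    have hpos : 0 < (n : ℝ) ^ δ := Real.rpow_pos_of_pos hn0 δ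
    have hδle : (n : ℝ) ^ δ ≤ Real.sqrt n := by
      rw [Real.sqrt_eq_rpow]
      exact Real.rpow_le_rpow_of_exponent_le hn1 (le_of_lt hδ2)
    have hb : (n : ℝ) ^ δ * |β n m - β n m'| ≤ C := by
      calc (n : ℝ) ^ δ * |β n m - β n m'|
          ≤ Real.sqrt n * |β n m - β n m'| :=
            mul_le_mul_of_nonneg_right hδle (abs_nonneg _)
        _ = |Real.sqrt n * (β n m - β n m')| := by
            rw [abs_mul, abs_of_nonneg (Real.sqrt_nonneg _)]
        _ ≤ C := le_of_lt (by rw [Real.norm_eq_abs] at h1; exact h1)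
    have : |β n m - β n m'| ≤ C / (n : ℝ) ^ δ := by
      rw [le_div_iff₀ hpos, mul_comm]; exact hb
    calc |β n m - β n m'| ≤ C / (n : ℝ) ^ δ := this
      _ = C * (n : ℝ) ^ (-δ) := by
          rw [Real.rpow_neg (Nat.cast_nonneg n), div_eq_mul_inv]
  -- eventual L-H separation
  have hEL : ∀ᶠ n : ℕ in atTop, ∀ l ∈ L, ∀ m ∈ H,
      D * (n : ℝ) ^ (-δ) ≤ β n m - β n l := by
    rw [eventually_all_finset]; intro l hl
    rw [eventually_all_finset]; intro m hm
    filter_upwards [(hsepLH l hl m hm).eventually_ge_atTop D, eventually_ge_atTop 1]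
      with n h1 h2
    have hn1 : (1 : ℝ) ≤ n := by exact_mod_cast h2
    have hpos : 0 < (n : ℝ) ^ δ := Real.rpow_pos_of_pos (lt_of_lt_of_le one_pos hn1) δ
    rw [Real.rpow_neg (Nat.cast_nonneg n), ← div_eq_mul_inv, div_le_iff₀ hpos, mul_comm]
    exact h1
  -- eventual H-U separation
  have hEU : ∀ᶠ n : ℕ in atTop, ∀ m ∈ H, ∀ u ∈ U,
      D * (n : ℝ) ^ (-δ) ≤ β n u - β n m := by
    rw [eventually_all_finset]; intro m hm
    rw [eventually_all_finset]; intro u hu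
    filter_upwards [(hsepHU m hm u hu).eventually_ge_atTop D, eventually_ge_atTop 1]
      with n h1 h2
    have hn1 : (1 : ℝ) ≤ n := by exact_mod_cast h2
    have hpos : 0 < (n : ℝ) ^ δ := Real.rpow_pos_of_pos (lt_of_lt_of_le one_pos hn1) δ
    rw [Real.rpow_neg (Nat.cast_nonneg n), ← div_eq_mul_inv, div_le_iff₀ hpos, mul_comm]
    exact h1
  -- key bound: the bad-event probability is dominated by a sum of concentration tails
  have key : ∀ᶠ n : ℕ in atTop,
      P n {ω | ε <
            |(if -cL * (n : ℝ) ^ (-δ) ≤ X n ω k - X n ω (jhat n ω) ∧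
                  X n ω k - X n ω (jhat n ω) ≤ cR * (n : ℝ) ^ (-δ)
                then (1 : ℝ) else 0) -
              (if k ∈ H then (1 : ℝ) else 0)|}
        ≤ ∑ m : Fin d, P n {ω | C * (n : ℝ) ^ (-δ) ≤ |X n ω m - β n m|} := by
    filter_upwards [hEt, hEH, hEL, hEU] with n ht hH2 hL2 hU2
    set t : ℝ := (n : ℝ) ^ (-δ) with htdef
    have hsub : {ω | ε <
            |(if -cL * t ≤ X n ω k - X n ω (jhat n ω) ∧
                  X n ω k - X n ω (jhat n ω) ≤ cR * t
                then (1 : ℝ) else 0) -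
              (if k ∈ H then (1 : ℝ) else 0)|}
        ≤ᶠ[ae (P n)] ⋃ m : Fin d, {ω | C * t ≤ |X n ω m - β n m|} := by
      filter_upwards [hrank n] with ω hrk
      intro hωS
      by_contra hbad0
      have hbad : ∀ m : Fin d, |X n ω m - β n m| < C * t := by
        intro m
        by_contra hge
        exact hbad0 (Set.mem_iUnion.2 ⟨m, not_lt.1 hge⟩)
      -- notation
      set Y : Fin d → ℝ := X n ω with hY
      set b : Fin d → ℝ := β n with hb
      set jh : Fin d := jhat n ω with hjh
      -- ordering facts on the good event
      have hDt : 2 * C * t < D * t := mul_lt_mul_of_pos_right hD2C ht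
      have f1 : ∀ m ∈ H, ∀ l ∈ L, Y l < Y m := by
        intro m hm l hl
        have a1 := abs_lt.1 (hbad m)
        have a2 := abs_lt.1 (hbad l)
        have a3 := hL2 l hl m hm
        linarith [a1.1, a2.2]
      have f2 : ∀ m ∈ H, ∀ u ∈ U, Y m < Y u := by
        intro m hm u hu
        have a1 := abs_lt.1 (hbad m)
        have a2 := abs_lt.1 (hbad u)
        have a3 := hU2 m hm u hu
        linarith [a1.2, a2.1]
      have f3 : ∀ l ∈ L, ∀ u ∈ U, Y l < Y u := by
        intro l hl u hu
        obtain ⟨m₀, hm₀⟩ := hHne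
        exact lt_trans (f1 m₀ hm₀ l hl) (f2 m₀ hm₀ u hu)
      -- the selected index lies in H
      have hjH : jh ∈ H := by
        rcases hmem jh with hjL | hjHm | hjU
        · exfalso
          have hsubs : H ∪ U ⊆ Finset.univ.filter (fun m => Y jh < Y m) := by
            intro m hm
            rcases Finset.mem_union.1 hm with hmH | hmU
            · exact Finset.mem_filter.2 ⟨Finset.mem_univ m, f1 m hmH jh hjL⟩
            · exact Finset.mem_filter.2 ⟨Finset.mem_univ m, f3 jh hjL m hmU⟩
          have hcard := Finset.card_le_card hsubs
          rw [Finset.card_union_of_disjoint hHU] at hcard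
          have := hrk.1
          omega
        · exact hjHm
        · exfalso
          have hsubs : Finset.univ.filter (fun m => Y jh ≤ Y m) ⊆ U := by
            intro m hm
            have hle := (Finset.mem_filter.1 hm).2
            rcases hmem m with hmL | hmH | hmU
            · exact absurd hle (not_le.2 (f3 m hmL jh hjU))
            · exact absurd hle (not_le.2 (f2 m hmH jh hjU))
            · exact hmU
          have hcard := Finset.card_le_card hsubs
          have := hrk.2
          omega
      -- the indicator difference vanishes
      have habsk := abs_lt.1 (hbad k)
      have habsj := abs_lt.1 (hbad jh)
      have hdiff0 : (if -cL * t ≤ Y k - Y jh ∧ Y k - Y jh ≤ cR * t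
            then (1 : ℝ) else 0) = (if k ∈ H then (1 : ℝ) else 0) := by
        rcases hmem k with hkL | hkH | hkU
        · have hkH' : k ∉ H := Finset.disjoint_left.1 hLH hkL
          have a3 := hL2 k hkL jh hjH
          have hclt : (cL + 2 * C) * t < D * t := by
            apply mul_lt_mul_of_pos_right _ ht
            simp only [hDdef]
            have : cL ≤ max cL cR := le_max_left _ _
            linarith
          have : Y k - Y jh < -cL * t := by linarith [habsk.2, habsj.1]
          rw [if_neg (by intro hcond; linarith [hcond.1]), if_neg hkH']
        · have a3 := abs_le.1 (hH2 k hkH jh hjH)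
          have h3C : 3 * C < min cL cR := by simp only [hCdef]; linarith
          have h3t : 3 * C * t < min cL cR * t := mul_lt_mul_of_pos_right h3C ht
          have hl : min cL cR * t ≤ cL * t :=
            mul_le_mul_of_nonneg_right (min_le_left _ _) ht.le
          have hr : min cL cR * t ≤ cR * t :=
            mul_le_mul_of_nonneg_right (min_le_right _ _) ht.le
          have hcond : -cL * t ≤ Y k - Y jh ∧ Y k - Y jh ≤ cR * t := by
            constructor
            · linarith [habsk.1, habsj.2, a3.1]
            · linarith [habsk.2, habsj.1, a3.2]
          rw [if_pos hcond, if_pos hkH]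
        · have hkH' : k ∉ H := Finset.disjoint_left.1 (hHU.symm) hkU
          have a3 := hU2 jh hjH k hkU
          have hclt : (cR + 2 * C) * t < D * t := by
            apply mul_lt_mul_of_pos_right _ ht
            simp only [hDdef]
            have : cR ≤ max cL cR := le_max_right _ _
            linarith
          have : cR * t < Y k - Y jh := by linarith [habsk.1, habsj.2]
          rw [if_neg (by intro hcond; linarith [hcond.2]), if_neg hkH']
      have h2 : ε < |(if -cL * t ≤ Y k - Y jh ∧ Y k - Y jh ≤ cR * t
            then (1 : ℝ) else 0) - (if k ∈ H then (1 : ℝ) else 0)| := hωS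
      rw [hdiff0] at h2
      simp only [sub_self, abs_zero] at h2
      linarith
    calc P n _ ≤ P n (⋃ m : Fin d, {ω | C * t ≤ |X n ω m - β n m|}) :=
          measure_mono_ae hsub
      _ ≤ ∑ m : Fin d, P n {ω | C * t ≤ |X n ω m - β n m|} :=
          measure_iUnion_fintype_le _ _
  -- finish by squeezing
  have hsum : Tendsto
      (fun n : ℕ => ∑ m : Fin d, P n {ω | C * (n : ℝ) ^ (-δ) ≤ |X n ω m - β n m|})
      atTop (𝓝 0) := by
    have := tendsto_finset_sum (Finset.univ : Finset (Fin d))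
      (fun m _ => hcons m C hC)
    simpa using this
  exact tendsto_of_tendsto_of_tendsto_of_le_of_le' tendsto_const_nhds hsum
    (Eventually.of_forall fun n => zero_le) key
end
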